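/- Let τ, σ > 0, let x̄ ∈ dom g ∩ int(dom φ_X) and ȳ⋆ ∈ dom h⋆ ∩ int(dom φ_{Y⋆}), and let (x̃, ỹ⋆) ∈ X × Y⋆. Suppose γ_g > 0 is such that g − γ_g·φ_X is convex on dom g ∩ dom φ_X, and γ_{h⋆} > 0 is such that h⋆ − γ_{h⋆}·φ_{Y⋆} is convex on dom h⋆ ∩ dom φ_{Y⋆}. Suppose x̂ ∈ dom g ∩ int(dom φ_X) minimizes x ↦ g(x) + ⟨ỹ⋆, Ax⟩ + (1/τ)·D_X(x, x̄) over X, and ŷ⋆ ∈ dom h⋆ ∩ int(dom φ_{Y⋆}) maximizes y⋆ ↦ −h⋆(y⋆) + ⟨y⋆, Ax̃⟩ − (1/σ)·D_Y(y⋆, ȳ⋆) over Y⋆. Then for every x ∈ dom g ∩ dom φ_X and every y⋆ ∈ dom h⋆ ∩ dom φ_{Y⋆}: L(x̂, y⋆) − L(x, ŷ⋆) ≤ (1/τ)(D_X(x, x̄) − D_X(x̂, x̄)) − ((1 + γ_g τ)/τ)·D_X(x, x̂) + (1/σ)(D_Y(y⋆, ȳ⋆) − D_Y(ŷ⋆,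 ȳ⋆)) − ((1 + γ_{h⋆} σ)/σ)·D_Y(y⋆, ŷ⋆) + ⟨ỹ⋆ − ŷ⋆, A(x − x̃)⟩ − ⟨y⋆ − ỹ⋆, A(x̃ − x̂)⟩. -/

import Mathlib

open Filter Topology

lemma key_three_point {E : Type*} [NormedAddCommGroup E] [NormedSpace ℝ E]
    {s : Set E} {F φ : E → ℝ} {c : ℝ}
    (hconv : ConvexOn ℝ s (fun z => F z - c * φ z))
    {xh x : E} (hxh : xh ∈ s) (hx : x ∈ s)
    {g' : ℝ} (hderiv : HasDerivAt (fun t : ℝ => φ (xh + t • (x - xh))) g' 0)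
    (hmin : ∀ z ∈ s, F xh ≤ F z) :
    c * (φ x - φ xh - g') ≤ F x - F xh := by
  set f : ℝ → ℝ := fun t => φ (xh + t • (x - xh)) with hf
  have hf0 : f 0 = φ xh := by simp [hf]
  have hslope : Tendsto (slope f 0) (𝓝[>] (0:ℝ)) (𝓝 g') :=
    (hasDerivAt_iff_tendsto_slope.mp hderiv).mono_left
      (nhdsWithin_mono _ (fun t ht => ne_of_gt ht))
  have hmain : Tendsto (fun t => c * (φ x - φ xh - slope f 0 t)) (𝓝[>] (0:ℝ))
      (𝓝 (c * (φ x - φ xh - g'))) :=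
    ((tendsto_const_nhds.sub hslope).const_mul c)
  refine le_of_tendsto hmain ?_
  filter_upwards [Ioc_mem_nhdsGT_of_mem (by constructor <;> norm_num : (0:ℝ) ∈ Set.Ico 0 1)]
    with t ht
  obtain ⟨ht0, ht1⟩ := ht
  have hcomb : xh + t • (x - xh) = (1 - t) • xh + t • x := by
    rw [smul_sub, sub_smul, one_smul]; abel
  have hz : xh + t • (x - xh) ∈ s := by
    rw [hcomb]
    exact hconv.1 hxh hx (by linarith) ht0.le (by ring)
  have hψ := hconv.2 hxh hx (by linarith : (0:ℝ) ≤ 1 - t) ht0.le (by ring)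
  rw [← hcomb] at hψ
  simp only [smul_eq_mul] at hψ
  have hFz : F xh ≤ F (xh + t • (x - xh)) := hmin _ hz
  have hs : slope f 0 t = (φ (xh + t • (x - xh)) - φ xh) / t := by
    simp [slope, hf, div_eq_inv_mul]
  rw [hs]
  have key1 : c * (t * φ x - t * φ xh - (φ (xh + t • (x - xh)) - φ xh))
      ≤ t * (F x - F xh) := by nlinarith [hψ, hFz]
  have h2 : c * (φ x - φ xh - (φ (xh + t • (x - xh)) - φ xh) / t)
      = (c * (t * φ x - t * φ xh - (φ (xh + t • (x - xh)) - φ xh))) / t := by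
    have ht' : t ≠ 0 := ne_of_gt ht0
    field_simp
  rw [h2, div_le_iff₀ ht0]
  nlinarith [key1]

theorem descent_rule_strong
    {X Y : Type*} [NormedAddCommGroup X] [NormedSpace ℝ X] [CompleteSpace X]
    [NormedAddCommGroup Y] [NormedSpace ℝ Y] [CompleteSpace Y]
    (A : X →L[ℝ] Y)
    (φX : X → ℝ) (SX : Set X) (gX : X → (X →L[ℝ] ℝ))
    (φY : (Y →L[ℝ] ℝ) → ℝ) (SY : Set (Y →L[ℝ] ℝ)) (gY : (Y →L[ℝ] ℝ) → Y)
    (hSXne : SX.Nonempty) (hφXconv : ConvexOn ℝ SX φX)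
    (hφXlsc : LowerSemicontinuousOn φX SX)
    (hSYne : SY.Nonempty) (hφYconv : ConvexOn ℝ SY φY)
    (hφYlsc : LowerSemicontinuousOn φY SY)
    (hφXdiff : ∀ x ∈ interior SX, ∀ w : X,
      HasDerivAt (fun t : ℝ => φX (x + t • w)) (gX x w) 0)
    (hφYdiff : ∀ p ∈ interior SY, ∀ q : Y →L[ℝ] ℝ,
      HasDerivAt (fun t : ℝ => φY (p + t • q)) (q (gY p)) 0)
    (DX : X → X → ℝ) (hDXdef : ∀ x x', DX x x' = φX x - φX x' - gX x' (x - x'))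
    (DY : (Y →L[ℝ] ℝ) → (Y →L[ℝ] ℝ) → ℝ)
    (hDYdef : ∀ p q, DY p q = φY p - φY q - (p - q) (gY q))
    (g : X → ℝ) (Sg : Set X) (hSgne : Sg.Nonempty)
    (hgconv : ConvexOn ℝ Sg g) (hglsc : LowerSemicontinuousOn g Sg)
    (hst : (Y →L[ℝ] ℝ) → ℝ) (Sh : Set (Y →L[ℝ] ℝ)) (hShne : Sh.Nonempty)
    (hhconv : ConvexOn ℝ Sh hst) (hhlsc : LowerSemicontinuousOn hst Sh)
    (L : X → (Y →L[ℝ] ℝ) → ℝ) (hLdef : ∀ x p, L x p = g x + p (A x) - hst p)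
    (γg γh : ℝ) (hγg : 0 < γg) (hγh : 0 < γh)
    (hA6 : ConvexOn ℝ (Sg ∩ SX) (fun x => g x - γg * φX x))
    (hA7 : ConvexOn ℝ (Sh ∩ SY) (fun p => hst p - γh * φY p))
    (τ σ : ℝ) (hτ : 0 < τ) (hσ : 0 < σ)
    (xbar : X) (hxbar : xbar ∈ Sg ∩ interior SX)
    (ybar : Y →L[ℝ] ℝ) (hybar : ybar ∈ Sh ∩ interior SY)
    (xt : X) (yt : Y →L[ℝ] ℝ)
    (xh : X) (hxh : xh ∈ Sg ∩ interior SX)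
    (hxhmin : ∀ x ∈ Sg ∩ SX,
      g xh + yt (A xh) + (1/τ) * DX xh xbar ≤ g x + yt (A x) + (1/τ) * DX x xbar)
    (yh : Y →L[ℝ] ℝ) (hyh : yh ∈ Sh ∩ interior SY)
    (hyhmax : ∀ p ∈ Sh ∩ SY,
      -hst p + p (A xt) - (1/σ) * DY p ybar ≤
        -hst yh + yh (A xt) - (1/σ) * DY yh ybar) :
    ∀ x ∈ Sg ∩ SX, ∀ p ∈ Sh ∩ SY,
      L xh p - L x yh ≤
        (1/τ) * (DX x xbar - DX xh xbar) - ((1 + γg * τ)/τ) * DX x xh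
        + (1/σ) * (DY p ybar - DY yh ybar) - ((1 + γh * σ)/σ) * DY p yh
        + (yt - yh) (A (x - xt)) - (p - yt) (A (xt - xh)) := by
  intro x hx p hp
  have hxh' : xh ∈ Sg ∩ SX := ⟨hxh.1, interior_subset hxh.2⟩
  have hyh' : yh ∈ Sh ∩ SY := ⟨hyh.1, interior_subset hyh.2⟩
  have hτ0 : τ ≠ 0 := ne_of_gt hτ
  have hσ0 : σ ≠ 0 := ne_of_gt hσ
  -- X side
  set F1 : X → ℝ := fun z => g z + yt (A z) + (1/τ) * DX z xbar with hF1
  have hconv1 : ConvexOn ℝ (Sg ∩ SX) (fun z => F1 z - (γg + 1/τ) * φX z) := by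
    have haff : ConvexOn ℝ (Sg ∩ SX)
        (fun z => yt (A z) - (1/τ) * (φX xbar + gX xbar (z - xbar))) := by
      refine ⟨hA6.1, ?_⟩
      intro u hu v hv a b ha hb hab
      refine le_of_eq ?_
      simp only [map_add, map_smul, map_sub, smul_eq_mul]
      linear_combination ((1/τ) * φX xbar - (1/τ) * gX xbar xbar) * hab
    have heq : (fun z => F1 z - (γg + 1/τ) * φX z)
        = fun z => (g z - γg * φX z)
            + (yt (A z) - (1/τ) * (φX xbar + gX xbar (z - xbar))) := by
      funext z
      simp only [hF1, hDXdef]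
      ring
    rw [heq]
    exact hA6.add haff
  have hkX := key_three_point hconv1 hxh' hx (hφXdiff xh hxh.2 (x - xh))
    (fun z hz => hxhmin z hz)
  rw [← hDXdef] at hkX
  -- Y side
  set F2 : (Y →L[ℝ] ℝ) → ℝ := fun q => hst q - q (A xt) + (1/σ) * DY q ybar with hF2
  have hconv2 : ConvexOn ℝ (Sh ∩ SY) (fun q => F2 q - (γh + 1/σ) * φY q) := by
    have haff : ConvexOn ℝ (Sh ∩ SY)
        (fun q => -(q (A xt)) - (1/σ) * (φY ybar + (q - ybar) (gY ybar))) := by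
      refine ⟨hA7.1, ?_⟩
      intro u hu v hv a b ha hb hab
      refine le_of_eq ?_
      simp only [ContinuousLinearMap.add_apply, ContinuousLinearMap.smul_apply,
        ContinuousLinearMap.sub_apply, smul_eq_mul]
      linear_combination ((1/σ) * φY ybar - (1/σ) * ybar (gY ybar)) * hab
    have heq : (fun q => F2 q - (γh + 1/σ) * φY q)
        = fun q => (hst q - γh * φY q)
            + (-(q (A xt)) - (1/σ) * (φY ybar + (q - ybar) (gY ybar))) := by
      funext q
      simp only [hF2, hDYdef]
      ring
    rw [heq]
    exact hA7.add haff
  have hmin2 : ∀ q ∈ Sh ∩ SY, F2 yh ≤ F2 q := by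
    intro q hq
    have := hyhmax q hq
    simp only [hF2]
    linarith
  have hkY := key_three_point hconv2 hyh' hp (hφYdiff yh hyh.2 (p - yh)) hmin2
  rw [show (p - yh) (gY yh) = φY p - φY yh - DY p yh from by rw [hDYdef]; ring] at hkY
  -- assemble
  simp only [hF1, hF2] at hkX hkY
  rw [hLdef, hLdef]
  have hc1 : (1 + γg * τ)/τ = γg + 1/τ := by field_simp; ring
  have hc2 : (1 + γh * σ)/σ = γh + 1/σ := by field_simp; ring
  rw [hc1, hc2]
  simp only [map_sub, ContinuousLinearMap.sub_apply]
  ring_nf at hkX hkY ⊢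
  linarith [hkX, hkY]
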